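/- Let u : ℝ → ℝ be twice continuously differentiable with u'' square-integrable on ℝ. Then for every h ∈ ℝ the function x ↦ u(x−h) − u(x) + h·u'(x) is square-integrable, and its L²(ℝ)-norm is at most (h²/2)·‖u''‖_{L²(ℝ)}. -/

import Mathlib

open MeasureTheory
open scoped ENNReal

/-- **Taylor estimate for translations in `L²`** (Assumption 3.2, eq. (3.2), for the
FitzHugh–Nagumo example). If `u` is `C²` with `u''` square-integrable, then for every `h ∈ ℝ`
the function `x ↦ u(x−h) − u(x) + h·u'(x)` is square-integrable with
`‖u(·−h) − u + h·u'‖_{L²} ≤ (h²/2)·‖u''‖_{L²}`. -/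
theorem taylor_translation_L2_estimate
    (u : ℝ → ℝ) (hu : ContDiff ℝ 2 u)
    (hu'' : MemLp (iteratedDeriv 2 u) 2 volume) :
    ∀ h : ℝ,
      MemLp (fun x => u (x - h) - u x + h * deriv u x) 2 volume ∧
      eLpNorm (fun x => u (x - h) - u x + h * deriv u x) 2 volume ≤
        ENNReal.ofReal (h ^ 2 / 2) * eLpNorm (iteratedDeriv 2 u) 2 volume := by
  intro h
  -- regularity facts
  have hdu : Differentiable ℝ u := hu.differentiable (by norm_num)
  have h1 : ContDiff ℝ 1 (deriv u) := by
    have := (contDiff_succ_iff_deriv (n := 1)).mp (by exact_mod_cast hu)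
    exact this.2.2
  have hdu' : Differentiable ℝ (deriv u) := h1.differentiable one_ne_zero
  set g : ℝ → ℝ := iteratedDeriv 2 u with hg
  have hgdd : g = deriv (deriv u) := by rw [hg, iteratedDeriv_succ, iteratedDeriv_one]
  have hgc : Continuous g := by
    rw [hgdd]; exact (contDiff_one_iff_deriv.mp h1).2
  set f : ℝ → ℝ := fun x => u (x - h) - u x + h * deriv u x with hf
  have hfc : Continuous f := by
    refine ((hu.continuous.comp (continuous_id.sub continuous_const)).sub
      hu.continuous).add (continuous_const.mul h1.continuous)
  -- Taylor identity
  have key : ∀ x : ℝ, f x = ∫ s in (0:ℝ)..1, (1 - s) * h^2 * g (x - s*h) := by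
    intro x
    have hφ : ∀ s ∈ Set.uIcc (0:ℝ) 1,
        HasDerivAt (fun s => u (x - s*h) - (1-s)*h*deriv u (x - s*h))
          ((1-s)*h^2 * g (x - s*h)) s := by
      intro s _
      have hc : HasDerivAt (fun s : ℝ => x - s*h) (-h) s := by
        simpa using ((hasDerivAt_id s).mul_const h).const_sub x
      have h2 : HasDerivAt (fun s : ℝ => u (x - s*h)) (deriv u (x - s*h) * (-h)) s :=
        (hdu (x - s*h)).hasDerivAt.comp s hc
      have h3 : HasDerivAt (fun s : ℝ => deriv u (x - s*h)) (g (x - s*h) * (-h)) s := by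
        rw [hgdd]; exact (hdu' (x - s*h)).hasDerivAt.comp s hc
      have h4 : HasDerivAt (fun s : ℝ => (1-s)*h) (-h) s := by
        simpa using ((hasDerivAt_id s).const_sub 1).mul_const h
      have := h2.sub (h4.mul h3)
      refine this.congr_deriv ?_
      ring
    have hcont : ContinuousOn (fun s => (1-s)*h^2 * g (x - s*h)) (Set.uIcc (0:ℝ) 1) :=
      (((continuous_const.sub continuous_id).mul continuous_const).mul
        (hgc.comp (continuous_const.sub (continuous_id.mul continuous_const)))).continuousOn
    have := intervalIntegral.integral_eq_sub_of_hasDerivAt hφ hcont.intervalIntegrable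
    rw [this, hf]
    simp
    ring
  -- notation
  set ν : Measure ℝ := volume.restrict (Set.Ioc (0:ℝ) 1) with hν
  set w : ℝ → ℝ≥0∞ := fun s => ENNReal.ofReal (1 - s) with hw
  have hwae : ∀ᵐ s ∂ν, 0 ≤ 1 - s := by
    rw [hν]
    filter_upwards [ae_restrict_mem measurableSet_Ioc] with s hs
    linarith [hs.2]
  have hw_int : ∫⁻ s, w s ∂ν = ENNReal.ofReal (1/2) := by
    rw [hw, hν, ← ofReal_integral_eq_lintegral_ofReal]
    · congr 1
      rw [← intervalIntegral.integral_of_le (by norm_num : (0:ℝ) ≤ 1),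
        intervalIntegral.integral_sub intervalIntegrable_const
          intervalIntegral.intervalIntegrable_id]
      simp
      norm_num
    · exact (continuous_const.sub continuous_id).integrableOn_Ioc
    · rw [← hν]; exact hwae
  -- pointwise L¹-type bound
  have hb1 : ∀ x : ℝ, (‖f x‖₊ : ℝ≥0∞) ≤
      ENNReal.ofReal (h^2) * ∫⁻ s, w s * (‖g (x - s*h)‖₊ : ℝ≥0∞) ∂ν := by
    intro x
    have habs : |f x| ≤ ∫ s in Set.Ioc (0:ℝ) 1, |(1 - s) * h^2 * g (x - s*h)| := by
      rw [key x, ← intervalIntegral.integral_of_le (by norm_num : (0:ℝ) ≤ 1)]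
      exact intervalIntegral.abs_integral_le_integral_abs (by norm_num)
    have hint : IntegrableOn (fun s => |(1 - s) * h^2 * g (x - s*h)|) (Set.Ioc (0:ℝ) 1) :=
      ((((continuous_const.sub continuous_id).mul continuous_const).mul
        (hgc.comp (continuous_const.sub (continuous_id.mul continuous_const)))).abs).integrableOn_Ioc
    calc (‖f x‖₊ : ℝ≥0∞) = ENNReal.ofReal |f x| := Real.enorm_eq_ofReal_abs _
      _ ≤ ENNReal.ofReal (∫ s in Set.Ioc (0:ℝ) 1, |(1 - s) * h^2 * g (x - s*h)|) :=
          ENNReal.ofReal_le_ofReal habs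
      _ = ∫⁻ s, ENNReal.ofReal |(1 - s) * h^2 * g (x - s*h)| ∂ν := by
          rw [hν]
          exact ofReal_integral_eq_lintegral_ofReal hint (ae_of_all _ fun s => abs_nonneg _)
      _ = ∫⁻ s, ENNReal.ofReal (h^2) * (w s * (‖g (x - s*h)‖₊ : ℝ≥0∞)) ∂ν := by
          refine lintegral_congr_ae ?_
          filter_upwards [hwae] with s hs
          rw [abs_mul, abs_mul, abs_of_nonneg hs, abs_of_nonneg (sq_nonneg h),
            ENNReal.ofReal_mul (by positivity), ENNReal.ofReal_mul hs, hw,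
            ← Real.enorm_eq_ofReal_abs, enorm_eq_nnnorm]
          ring
      _ = ENNReal.ofReal (h^2) * ∫⁻ s, w s * (‖g (x - s*h)‖₊ : ℝ≥0∞) ∂ν :=
          lintegral_const_mul' _ _ ENNReal.ofReal_ne_top
  -- Cauchy–Schwarz in s
  set K : ℝ → ℝ≥0∞ := fun x => ∫⁻ s, w s * (‖g (x - s*h)‖₊ : ℝ≥0∞)^(2:ℝ) ∂ν with hK
  have hb2 : ∀ x : ℝ, (∫⁻ s, w s * (‖g (x - s*h)‖₊ : ℝ≥0∞) ∂ν) ≤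
      (ENNReal.ofReal (1/2))^(1/2:ℝ) * (K x)^(1/2:ℝ) := by
    intro x
    have hmw : Measurable w := ENNReal.measurable_ofReal.comp (measurable_const.sub measurable_id)
    have hmg : Measurable fun s : ℝ => (‖g (x - s*h)‖₊ : ℝ≥0∞) :=
      (hgc.comp (continuous_const.sub (continuous_id.mul continuous_const))).measurable.nnnorm.coe_nnreal_ennreal
    have hpq : Real.HolderConjugate 2 2 := Real.HolderConjugate.two_two
    have := ENNReal.lintegral_mul_le_Lp_mul_Lq ν hpq
      (f := fun s => (w s)^(1/2:ℝ)) (g := fun s => (w s)^(1/2:ℝ) * (‖g (x - s*h)‖₊ : ℝ≥0∞))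
      (hmw.pow_const _).aemeasurable ((hmw.pow_const _).mul hmg).aemeasurable
    have hsq : ∀ a : ℝ≥0∞, (a^(1/2:ℝ))^(2:ℝ) = a := by
      intro a
      rw [← ENNReal.rpow_mul]
      norm_num
    calc (∫⁻ s, w s * (‖g (x - s*h)‖₊ : ℝ≥0∞) ∂ν)
        = ∫⁻ s, ((fun s => (w s)^(1/2:ℝ)) * fun s => (w s)^(1/2:ℝ) * (‖g (x - s*h)‖₊ : ℝ≥0∞)) s ∂ν := by
          refine lintegral_congr fun s => ?_
          simp only [Pi.mul_apply, ← mul_assoc]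
          rw [← ENNReal.rpow_add_of_nonneg (x := w s) _ _ (by norm_num) (by norm_num)]
          norm_num
      _ ≤ (∫⁻ s, ((w s)^(1/2:ℝ))^(2:ℝ) ∂ν) ^ (1/2:ℝ) *
            (∫⁻ s, ((w s)^(1/2:ℝ) * (‖g (x - s*h)‖₊ : ℝ≥0∞))^(2:ℝ) ∂ν) ^ (1/2:ℝ) := this
      _ = (ENNReal.ofReal (1/2))^(1/2:ℝ) * (K x)^(1/2:ℝ) := by
          congr 1
          · rw [← hw_int]
            congr 1
            exact lintegral_congr fun s => hsq (w s)
          · rw [hK]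
            congr 1
            refine lintegral_congr fun s => ?_
            rw [ENNReal.mul_rpow_of_nonneg _ _ (by norm_num), hsq]
  -- global rpow helpers
  have hsq : ∀ a : ℝ≥0∞, (a^(1/2:ℝ))^(2:ℝ) = a := by
    intro a; rw [← ENNReal.rpow_mul]; norm_num
  have hsq' : ∀ a : ℝ≥0∞, (a^(2:ℝ))^(1/2:ℝ) = a := by
    intro a; rw [← ENNReal.rpow_mul]; norm_num
  -- squared pointwise bound
  have hb3 : ∀ x : ℝ, ((‖f x‖₊ : ℝ≥0∞))^(2:ℝ) ≤
      ENNReal.ofReal (h^2) ^ (2:ℝ) * ENNReal.ofReal (1/2) * K x := by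
    intro x
    have hle : (‖f x‖₊ : ℝ≥0∞) ≤
        ENNReal.ofReal (h^2) * ((ENNReal.ofReal (1/2))^(1/2:ℝ) * (K x)^(1/2:ℝ)) :=
      (hb1 x).trans (mul_le_mul_right (hb2 x) _)
    calc ((‖f x‖₊ : ℝ≥0∞))^(2:ℝ)
        ≤ (ENNReal.ofReal (h^2) * ((ENNReal.ofReal (1/2))^(1/2:ℝ) * (K x)^(1/2:ℝ)))^(2:ℝ) :=
          ENNReal.rpow_le_rpow hle (by norm_num)
      _ = ENNReal.ofReal (h^2) ^ (2:ℝ) * ENNReal.ofReal (1/2) * K x := by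
          rw [ENNReal.mul_rpow_of_nonneg _ _ (by norm_num),
            ENNReal.mul_rpow_of_nonneg _ _ (by norm_num), hsq, hsq]
          ring
  -- the L² quantities
  set S : ℝ≥0∞ := eLpNorm g 2 volume with hS
  set I : ℝ≥0∞ := ∫⁻ x, ((‖g x‖₊ : ℝ≥0∞))^(2:ℝ) ∂volume with hI
  have hSI : S = I ^ (1/2:ℝ) := by
    rw [hS, eLpNorm_eq_lintegral_rpow_enorm_toReal (by norm_num) (by norm_num), hI]
    norm_num
    rfl
  have hIS : I = S ^ (2:ℝ) := by rw [hSI, hsq]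
  have hI_ne : I ≠ ∞ := by
    rw [hIS]
    exact ENNReal.rpow_ne_top_of_nonneg (by norm_num) hu''.2.ne
  -- Tonelli
  have hKint : ∫⁻ x, K x ∂volume = ENNReal.ofReal (1/2) * I := by
    have hmF : AEMeasurable (Function.uncurry fun (x s : ℝ) =>
        w s * ((‖g (x - s*h)‖₊ : ℝ≥0∞))^(2:ℝ)) (volume.prod ν) := by
      refine Measurable.aemeasurable (Measurable.mul ?_ ?_)
      · exact ENNReal.measurable_ofReal.comp (measurable_const.sub measurable_snd)
      · exact ENNReal.continuous_rpow_const.measurable.comp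
          ((hgc.measurable.comp
            (measurable_fst.sub (measurable_snd.mul_const h))).nnnorm.coe_nnreal_ennreal)
    calc ∫⁻ x, K x ∂volume
        = ∫⁻ s, (∫⁻ x, w s * ((‖g (x - s*h)‖₊ : ℝ≥0∞))^(2:ℝ) ∂volume) ∂ν :=
          lintegral_lintegral_swap hmF
      _ = ∫⁻ s, w s * I ∂ν := by
          refine lintegral_congr fun s => ?_
          rw [lintegral_const_mul' _ _ ENNReal.ofReal_ne_top, hI,
            lintegral_sub_right_eq_self (fun x => ((‖g x‖₊ : ℝ≥0∞))^(2:ℝ)) (s*h)]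
      _ = ENNReal.ofReal (1/2) * I := by
          rw [lintegral_mul_const' I w hI_ne, hw_int]
  -- norm bound
  have hbound : eLpNorm f 2 volume ≤ ENNReal.ofReal (h^2/2) * S := by
    rw [eLpNorm_eq_lintegral_rpow_enorm_toReal (by norm_num) (by norm_num)]
    have hTle : (∫⁻ x, ((‖f x‖₊ : ℝ≥0∞))^(2:ℝ) ∂volume) ≤
        (ENNReal.ofReal (h^2/2) * S)^(2:ℝ) := by
      calc (∫⁻ x, ((‖f x‖₊ : ℝ≥0∞))^(2:ℝ) ∂volume)
          ≤ ∫⁻ x, ENNReal.ofReal (h^2) ^ (2:ℝ) * ENNReal.ofReal (1/2) * K x ∂volume :=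
            lintegral_mono hb3
        _ = ENNReal.ofReal (h^2) ^ (2:ℝ) * ENNReal.ofReal (1/2) * ∫⁻ x, K x ∂volume :=
            lintegral_const_mul' _ _
              (ENNReal.mul_ne_top
                (ENNReal.rpow_ne_top_of_nonneg (by norm_num) ENNReal.ofReal_ne_top)
                ENNReal.ofReal_ne_top)
        _ = (ENNReal.ofReal (h^2/2) * S)^(2:ℝ) := by
            rw [hKint, hIS,
              show h^2/2 = h^2 * (1/2) by ring, ENNReal.ofReal_mul (sq_nonneg h),
              ENNReal.mul_rpow_of_nonneg _ _ (by norm_num : (0:ℝ) ≤ 2),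
              ENNReal.mul_rpow_of_nonneg _ _ (by norm_num : (0:ℝ) ≤ 2)]
            have h2 : ∀ a : ℝ≥0∞, a ^ (2:ℝ) = a * a := fun a => by
              rw [show (2:ℝ) = 1 + 1 by norm_num,
                ENNReal.rpow_add_of_nonneg _ _ (by norm_num) (by norm_num), ENNReal.rpow_one]
            simp only [h2]
            ring
    have : (∫⁻ x, ((‖f x‖₊ : ℝ≥0∞))^(2:ℝ) ∂volume) ^ ((2:ℝ≥0∞).toReal)⁻¹ ≤
        ((ENNReal.ofReal (h^2/2) * S)^(2:ℝ)) ^ ((2:ℝ≥0∞).toReal)⁻¹ := by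
      exact ENNReal.rpow_le_rpow hTle (by norm_num)
    simp only [ENNReal.toReal_ofNat] at this ⊢
    calc (∫⁻ x, ((‖f x‖₊ : ℝ≥0∞)) ^ ((2:ℝ≥0∞).toReal) ∂volume) ^ (1/(2:ℝ≥0∞).toReal)
        ≤ ((ENNReal.ofReal (h^2/2) * S)^(2:ℝ)) ^ (1/(2:ℝ≥0∞).toReal) := by
          simp only [ENNReal.toReal_ofNat]
          rw [one_div]
          exact this
      _ = ENNReal.ofReal (h^2/2) * S := by
          simp only [ENNReal.toReal_ofNat]
          rw [show (1:ℝ)/2 = (2:ℝ)⁻¹ by norm_num, ← one_div, hsq']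
  exact ⟨⟨hfc.aestronglyMeasurable,
      lt_of_le_of_lt hbound (ENNReal.mul_lt_top ENNReal.ofReal_lt_top hu''.2)⟩, hbound⟩
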